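/- The second-order cone projection formula: for (t,u) ∈ ℝ × ℝⁿ with ‖u‖₂ ≥ |t| and u ≠ 0, the Euclidean projection of (t,u) onto the second-order cone equals (1/2)(1 + t/‖u‖₂)(‖u‖₂, u). -/

import Mathlib

open scoped RealInnerProductSpace

/-- The second-order cone in `ℝ × ℝⁿ`. -/
def secondOrderCone (n : ℕ) : Set (ℝ × EuclideanSpace ℝ (Fin n)) :=
  {p | ‖p.2‖ ≤ p.1}

/-- Squared Euclidean distance on `ℝ × ℝⁿ`. -/
noncomputable def distSq (n : ℕ) (p q : ℝ × EuclideanSpace ℝ (Fin n)) : ℝ :=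
  (p.1 - q.1) ^ 2 + ‖p.2 - q.2‖ ^ 2


private lemma socArith (r t s a d : ℝ) (hr : 0 < r) (hneg : -r ≤ t) (hpos : t ≤ r)
    (has : a ≤ s) (ha : 0 ≤ a) (hd : 0 ≤ d) (hsq : (r - a) ^ 2 ≤ d ^ 2)
    (heq : (t - s) ^ 2 + d ^ 2 = (r - t) ^ 2 / 2) :
    s = a ∧ s = (r + t) / 2 ∧ d = r - a := by
  have key : (t - s) ^ 2 + (r - a) ^ 2 ≤ (r - t) ^ 2 / 2 := by linarith
  have e1 : (t - s - a + r) ^ 2 + (s - a) * (2 * r - 2 * t) + (s - a) ^ 2 ≤ 0 := by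
    nlinarith [key]
  have p1 : 0 ≤ (s - a) * (2 * r - 2 * t) := mul_nonneg (by linarith) (by linarith)
  have e2 : (s - a) ^ 2 = 0 :=
    le_antisymm (by nlinarith [sq_nonneg (t - s - a + r)]) (sq_nonneg _)
  have e3 : (t - s - a + r) ^ 2 = 0 :=
    le_antisymm (by nlinarith [sq_nonneg (s - a)]) (sq_nonneg _)
  have hsa : s = a := by have := sq_eq_zero_iff.mp e2; linarith
  have hs2 : s = (r + t) / 2 := by have := sq_eq_zero_iff.mp e3; linarith
  refine ⟨hsa, hs2, ?_⟩
  have hdd : d ^ 2 = (r - a) ^ 2 := by nlinarith [heq]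
  have h4 : 0 ≤ r - a := by nlinarith
  nlinarith [hdd, sq_nonneg (d - (r - a)), sq_nonneg (d + (r - a))]

/-- For `‖u‖ ≥ |t|` and `u ≠ 0`, the Euclidean projection of `(t,u)` onto the
second-order cone is `(1/2)(1 + t/‖u‖)(‖u‖, u)`: this point lies in the cone, is the
nearest point of the cone, and is the unique such nearest point. -/
theorem soc_projection_formula (n : ℕ) (t : ℝ) (u : EuclideanSpace ℝ (Fin n))
    (hu : u ≠ 0) (h : |t| ≤ ‖u‖) :
    ((1/2) * (1 + t / ‖u‖) * ‖u‖, ((1/2) * (1 + t / ‖u‖)) • u) ∈ secondOrderCone n ∧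
    (∀ w ∈ secondOrderCone n,
      distSq n (t, u) ((1/2) * (1 + t / ‖u‖) * ‖u‖, ((1/2) * (1 + t / ‖u‖)) • u)
        ≤ distSq n (t, u) w) ∧
    (∀ w ∈ secondOrderCone n, (∀ w' ∈ secondOrderCone n, distSq n (t, u) w ≤ distSq n (t, u) w') →
      w = ((1/2) * (1 + t / ‖u‖) * ‖u‖, ((1/2) * (1 + t / ‖u‖)) • u)) := by
  set r := ‖u‖ with hr_def
  have hr : 0 < r := norm_pos_iff.2 hu
  have habs := abs_le.1 h
  set α : ℝ := (1/2) * (1 + t / r) with hα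
  have hαr : α * r = (r + t) / 2 := by
    rw [hα]; field_simp
  have hα0 : 0 ≤ α := by
    have h1 : -1 ≤ t / r := by rw [le_div_iff₀ hr]; linarith [habs.1]
    rw [hα]; linarith
  have hα1 : α ≤ 1 := by
    have h1 : t / r ≤ 1 := by rw [div_le_iff₀ hr]; linarith [habs.2]
    rw [hα]; linarith
  -- membership
  have hmem : (α * r, α • u) ∈ secondOrderCone n := by
    show ‖α • u‖ ≤ α * r
    rw [norm_smul, Real.norm_eq_abs, abs_of_nonneg hα0]
  -- distance to the candidate point
  have hd0 : distSq n (t, u) (α * r, α • u) = (r - t) ^ 2 / 2 := by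
    simp only [distSq]
    have h1 : u - α • u = (1 - α) • u := by rw [sub_smul, one_smul]
    rw [h1, norm_smul, Real.norm_eq_abs, abs_of_nonneg (by linarith : (0:ℝ) ≤ 1 - α)]
    have h2 : (1 - α) * r = (r - t) / 2 := by nlinarith [hαr]
    rw [h2]
    nlinarith [hαr]
  -- key lower bound
  have key : ∀ w ∈ secondOrderCone n, (r - t) ^ 2 / 2 ≤ distSq n (t, u) w := by
    rintro ⟨s, v⟩ hw
    have hw' : ‖v‖ ≤ s := hw
    simp only [distSq]
    have ha : (0:ℝ) ≤ ‖v‖ := norm_nonneg v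
    have htri : r - ‖v‖ ≤ ‖u - v‖ := by
      have := norm_sub_norm_le u v; linarith
    have htri2 : ‖v‖ - r ≤ ‖u - v‖ := by
      have := norm_sub_norm_le v u; rw [norm_sub_rev] at this; linarith
    have hsq : (r - ‖v‖) ^ 2 ≤ ‖u - v‖ ^ 2 := sq_le_sq' (by linarith) htri
    nlinarith [sq_nonneg (t - s - ‖v‖ + r), sq_nonneg (s - ‖v‖),
      mul_nonneg (sub_nonneg.2 hw') (by linarith : (0:ℝ) ≤ r - t)]
  refine ⟨hmem, fun w hw => ?_, ?_⟩
  · rw [hd0]; exact key w hw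
  · rintro ⟨s, v⟩ hw hmin
    have hw' : ‖v‖ ≤ s := hw
    have hle := hmin _ hmem
    have heq : distSq n (t, u) (s, v) = (r - t) ^ 2 / 2 :=
      le_antisymm (hd0 ▸ hle) (key _ hw)
    simp only [distSq] at heq
    have ha : (0:ℝ) ≤ ‖v‖ := norm_nonneg v
    have htri : r - ‖v‖ ≤ ‖u - v‖ := by
      have := norm_sub_norm_le u v; linarith
    have htri2 : ‖v‖ - r ≤ ‖u - v‖ := by
      have := norm_sub_norm_le v u; rw [norm_sub_rev] at this; linarith
    have hsq : (r - ‖v‖) ^ 2 ≤ ‖u - v‖ ^ 2 := sq_le_sq' (by linarith) htri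
    obtain ⟨h1, h2, h3⟩ :=
      socArith r t s ‖v‖ ‖u - v‖ hr habs.1 habs.2 hw' (norm_nonneg v)
        (norm_nonneg (u - v)) hsq heq
    have hexp : ‖u - v‖ ^ 2 = ‖u‖ ^ 2 - 2 * (inner ℝ u v : ℝ) + ‖v‖ ^ 2 :=
      norm_sub_sq_real u v
    rw [← hr_def, h3] at hexp
    have hin : (inner ℝ u v : ℝ) = ‖u‖ * ‖v‖ := by
      rw [← hr_def]
      linear_combination hexp / 2
    have hsm : ‖v‖ • u = ‖u‖ • v := inner_eq_norm_mul_iff_real.mp hin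
    have hrv : r • v = ‖v‖ • u := hsm.symm
    have hv : v = (‖v‖ / r) • u := by
      have h5 : r⁻¹ • (r • v) = r⁻¹ • (‖v‖ • u) := by rw [hrv]
      rw [smul_smul, inv_mul_cancel₀ hr.ne', one_smul, smul_smul, ← div_eq_inv_mul] at h5
      exact h5
    have hαeq : ‖v‖ / r = α := by
      rw [← h1, h2, hα]; field_simp
    simp only [Prod.mk.injEq]
    exact ⟨by rw [h2, ← hαr], by rw [hv, hαeq]⟩
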